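/- In C_{3k+1}, if x, y, z are three vectors each of Hamming weight k with pairwise disjoint supports, then they form an independent set whose unique common neighbor is the all-ones vector; in particular μ₃(C_{3k+1}) = 1. -/

import Mathlib

/-- The graph `C_{3k+1}`: vertices are vectors in `(Z/2)^{3k+1}`,
adjacent iff their Hamming distance is at least `2k+1`. -/
def hypercubeGraph (k : ℕ) : SimpleGraph (Fin (3 * k + 1) → ZMod 2) where
  Adj x y := 2 * k + 1 ≤ hammingDist x y
  symm := ⟨by
    intro x y h
    change 2 * k + 1 ≤ hammingDist x y at h
    change 2 * k + 1 ≤ hammingDist y x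
    rwa [hammingDist_comm]⟩
  loopless := ⟨by
    intro x h
    change 2 * k + 1 ≤ hammingDist x x at h
    rw [hammingDist_self] at h; omega⟩

/-- The minimum, over independent triples, of the number of common neighbors. -/
noncomputable def mu3 {V : Type*} (G : SimpleGraph V) : ℕ :=
  sInf {n | ∃ x y z : V, x ≠ y ∧ x ≠ z ∧ y ≠ z ∧
    ¬ G.Adj x y ∧ ¬ G.Adj x z ∧ ¬ G.Adj y z ∧
    {v | G.Adj v x ∧ G.Adj v y ∧ G.Adj v z}.ncard = n}


open Finset in
lemma core' {α : Type*} [DecidableEq α] (k : ℕ) (B C : Finset α)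
    (hB : B.card ≤ 2*k) (hC : C.card ≤ 2*k)
    (hBC : (B \ C).card + (C \ B).card ≤ 2*k)
    (hγ : (C \ B).card ≤ k) :
    ∃ W : Finset α, W.card ≤ k ∧ (W \ B).card + (B \ W).card ≤ k ∧
      (W \ C).card + (C \ W).card ≤ k := by
  have hBs := Finset.card_sdiff_add_card_inter B C
  have hCs := Finset.card_sdiff_add_card_inter C B
  rw [Finset.inter_comm] at hCs
  by_cases hβ : (B \ C).card ≤ k
  · by_cases hδ : (B ∩ C).card ≤ k
    · refine ⟨B ∩ C, hδ, ?_, ?_⟩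
      · have e1 : (B ∩ C) \ B = ∅ := by
          simp [Finset.sdiff_eq_empty_iff_subset, Finset.inter_subset_left]
        rw [e1, Finset.sdiff_inter_self_left]
        simpa using hβ
      · have e1 : (B ∩ C) \ C = ∅ := by
          simp [Finset.sdiff_eq_empty_iff_subset, Finset.inter_subset_right]
        rw [e1, Finset.sdiff_inter_self_right]
        simpa using hγ
    · obtain ⟨W, hWsub, hWcard⟩ := Finset.exists_subset_card_eq (by omega : k ≤ (B ∩ C).card)
      have hWB : W ⊆ B := hWsub.trans Finset.inter_subset_left
      have hWC : W ⊆ C := hWsub.trans Finset.inter_subset_right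
      have e1 : W \ B = ∅ := by simpa [Finset.sdiff_eq_empty_iff_subset] using hWB
      have e2 : W \ C = ∅ := by simpa [Finset.sdiff_eq_empty_iff_subset] using hWC
      refine ⟨W, le_of_eq hWcard, ?_, ?_⟩
      · rw [e1, Finset.card_sdiff_of_subset hWB, hWcard]; simp; omega
      · rw [e2, Finset.card_sdiff_of_subset hWC, hWcard]; simp; omega
  · obtain ⟨T, hTsub, hTcard⟩ := Finset.exists_subset_card_eq (by omega : (B \ C).card - k ≤ (B \ C).card)
    have hdisj : Disjoint (B ∩ C) T :=
      (Finset.disjoint_sdiff_inter B C).symm.mono_right hTsub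
    have hWB : B ∩ C ∪ T ⊆ B :=
      Finset.union_subset Finset.inter_subset_left (hTsub.trans Finset.sdiff_subset)
    have hTC : Disjoint T C := Finset.sdiff_disjoint.mono_left hTsub
    have hcardW : (B ∩ C ∪ T).card = (B ∩ C).card + ((B \ C).card - k) := by
      rw [Finset.card_union_of_disjoint hdisj, hTcard]
    refine ⟨B ∩ C ∪ T, by omega, ?_, ?_⟩
    · have e1 : (B ∩ C ∪ T) \ B = ∅ := by
        simpa [Finset.sdiff_eq_empty_iff_subset] using hWB
      rw [e1, Finset.card_sdiff_of_subset hWB, hcardW]; simp; omega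
    · have h1 : (B ∩ C ∪ T) \ C = T := by
        have e2 : (B ∩ C) \ C = ∅ := by
          simp [Finset.sdiff_eq_empty_iff_subset, Finset.inter_subset_right]
        rw [Finset.union_sdiff_distrib, e2, Finset.empty_union,
          Finset.sdiff_eq_self_iff_disjoint.2 hTC]
      have h2 : C \ (B ∩ C ∪ T) = C \ B := by
        ext i
        simp only [Finset.mem_sdiff, Finset.mem_union, Finset.mem_inter]
        have hiT : i ∈ T → i ∉ C := fun h => Finset.disjoint_left.1 hTC h
        tauto
      rw [h1, h2, hTcard]; omega

lemma core {α : Type*} [DecidableEq α] (k : ℕ) (B C : Finset α)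
    (hB : B.card ≤ 2*k) (hC : C.card ≤ 2*k)
    (hBC : (B \ C).card + (C \ B).card ≤ 2*k) :
    ∃ W : Finset α, W.card ≤ k ∧ (W \ B).card + (B \ W).card ≤ k ∧
      (W \ C).card + (C \ W).card ≤ k := by
  by_cases hγ : (C \ B).card ≤ k
  · exact core' k B C hB hC hBC hγ
  · obtain ⟨W, h1, h2, h3⟩ := core' k C B hC hB (by omega) (by omega)
    exact ⟨W, h1, h3, h2⟩

lemma zmod2_cases : ∀ a : ZMod 2, a = 0 ∨ a = 1 := by decide

lemma step (k : ℕ) (a b : Fin (3*k+1) → ZMod 2) (W : Finset (Fin (3*k+1)))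
    (h : (W \ (Finset.univ.filter fun i => a i ≠ b i)).card
        + ((Finset.univ.filter fun i => a i ≠ b i) \ W).card ≤ k) :
    2*k+1 ≤ hammingDist (fun i => if i ∈ W then a i else a i + 1) b := by
  classical
  set B : Finset (Fin (3*k+1)) := Finset.univ.filter (fun i => a i ≠ b i) with hBdef
  have hpt : ∀ p q : ZMod 2, (p + 1 ≠ q ↔ p = q) := by decide
  have key : (Finset.univ.filter fun i =>
      (fun i => if i ∈ W then a i else a i + 1) i ≠ b i) = (W ∩ B) ∪ (Wᶜ ∩ Bᶜ) := by
    ext i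
    by_cases h1 : i ∈ W <;>
      simp [hBdef, Finset.mem_filter, Finset.mem_inter, Finset.mem_compl, h1, hpt]
  have hdisj : Disjoint (W ∩ B) (Wᶜ ∩ Bᶜ) :=
    disjoint_compl_right.mono Finset.inter_subset_left Finset.inter_subset_left
  unfold hammingDist
  rw [key, Finset.card_union_of_disjoint hdisj, ← Finset.compl_union, Finset.card_compl,
    Fintype.card_fin]
  have h1 := Finset.card_sdiff_add_card_inter W B
  have h2 := Finset.card_sdiff_add_card_inter B W
  rw [Finset.inter_comm B W] at h2
  have h3 : (W ∪ B).card ≤ 3*k+1 := by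
    simpa using Finset.card_le_univ (W ∪ B)
  have h4 := Finset.card_sdiff_add_card W B
  omega

lemma exists_common_neighbor (k : ℕ) (a b c : Fin (3*k+1) → ZMod 2)
    (hab : hammingDist a b ≤ 2*k) (hac : hammingDist a c ≤ 2*k)
    (hbc : hammingDist b c ≤ 2*k) :
    ∃ v, 2*k+1 ≤ hammingDist v a ∧ 2*k+1 ≤ hammingDist v b ∧ 2*k+1 ≤ hammingDist v c := by
  classical
  set B : Finset (Fin (3*k+1)) := Finset.univ.filter (fun i => a i ≠ b i) with hBdef
  set C : Finset (Fin (3*k+1)) := Finset.univ.filter (fun i => a i ≠ c i) with hCdef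
  have hBcard : B.card = hammingDist a b := rfl
  have hCcard : C.card = hammingDist a c := rfl
  have hxor : ∀ p q r : ZMod 2, (q ≠ r) ↔ ((p ≠ q ∧ ¬ p ≠ r) ∨ (p ≠ r ∧ ¬ p ≠ q)) := by
    decide
  have hBC : (B \ C).card + (C \ B).card = hammingDist b c := by
    have hd : Disjoint (B \ C) (C \ B) := disjoint_sdiff_sdiff
    rw [← Finset.card_union_of_disjoint hd]
    congr 1
    ext i
    simp only [hBdef, hCdef, Finset.mem_union, Finset.mem_sdiff, Finset.mem_filter,
      Finset.mem_univ, true_and, hammingDist]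
    exact (hxor (a i) (b i) (c i)).symm
  obtain ⟨W, hW, hWB, hWC⟩ := core k B C (hBcard ▸ hab) (hCcard ▸ hac) (hBC ▸ hbc)
  refine ⟨fun i => if i ∈ W then a i else a i + 1, ?_, step k a b W hWB, step k a c W hWC⟩
  have hA : (Finset.univ.filter fun i => a i ≠ a i) = (∅ : Finset (Fin (3*k+1))) := by
    simp
  apply step k a a W
  rw [hA]
  simpa using hW

lemma dist_of_disjoint {n : ℕ} (x y : Fin n → ZMod 2) (h : ∀ i, x i = 0 ∨ y i = 0) :
    hammingDist x y = hammingNorm x + hammingNorm y := by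
  classical
  have hpt : ∀ p q : ZMod 2, (p = 0 ∨ q = 0) → ((p ≠ q) ↔ (p ≠ 0 ∨ q ≠ 0)) := by decide
  have hfe : (Finset.univ.filter fun i => x i ≠ y i)
      = (Finset.univ.filter fun i => x i ≠ 0) ∪ (Finset.univ.filter fun i => y i ≠ 0) := by
    ext i
    simp only [Finset.mem_filter, Finset.mem_univ, true_and, Finset.mem_union]
    exact hpt _ _ (h i)
  have hd : Disjoint (Finset.univ.filter fun i => x i ≠ 0)
      (Finset.univ.filter fun i => y i ≠ 0) := by
    rw [Finset.disjoint_left]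
    intro i h1 h2
    simp only [Finset.mem_filter, Finset.mem_univ, true_and] at h1 h2
    rcases h i with h' | h' <;> [exact h1 h'; exact h2 h']
  show (Finset.univ.filter fun i => x i ≠ y i).card = _
  rw [hfe, Finset.card_union_of_disjoint hd]
  rfl

lemma support_card (k : ℕ) (x y z : Fin (3*k+1) → ZMod 2)
    (hwx : hammingNorm x = k) (hwy : hammingNorm y = k) (hwz : hammingNorm z = k)
    (hxy : ∀ i, x i = 0 ∨ y i = 0) (hxz : ∀ i, x i = 0 ∨ z i = 0)
    (hyz : ∀ i, y i = 0 ∨ z i = 0) :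
    (Finset.univ.filter fun i => x i = 0 ∧ y i = 0 ∧ z i = 0).card = 1 := by
  classical
  have h0 := Finset.card_filter_add_card_filter_not
    (s := (Finset.univ : Finset (Fin (3*k+1)))) (p := fun i => x i = 0 ∧ y i = 0 ∧ z i = 0)
  have hpt : ∀ p q r : ZMod 2, (¬(p = 0 ∧ q = 0 ∧ r = 0)) ↔ (p ≠ 0 ∨ q ≠ 0 ∨ r ≠ 0) := by decide
  have hfe : (Finset.univ.filter fun i => ¬(x i = 0 ∧ y i = 0 ∧ z i = 0))
      = (Finset.univ.filter fun i => x i ≠ 0) ∪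
        ((Finset.univ.filter fun i => y i ≠ 0) ∪ (Finset.univ.filter fun i => z i ≠ 0)) := by
    ext i
    simp only [Finset.mem_filter, Finset.mem_univ, true_and, Finset.mem_union]
    exact hpt _ _ _
  have hdyz : Disjoint (Finset.univ.filter fun i => y i ≠ 0)
      (Finset.univ.filter fun i => z i ≠ 0) := by
    rw [Finset.disjoint_left]
    intro i h1 h2
    simp only [Finset.mem_filter, Finset.mem_univ, true_and] at h1 h2
    rcases hyz i with h' | h' <;> [exact h1 h'; exact h2 h']
  have hdx : Disjoint (Finset.univ.filter fun i => x i ≠ 0)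
      ((Finset.univ.filter fun i => y i ≠ 0) ∪ (Finset.univ.filter fun i => z i ≠ 0)) := by
    rw [Finset.disjoint_left]
    intro i h1 h2
    simp only [Finset.mem_filter, Finset.mem_univ, true_and, Finset.mem_union] at h1 h2
    rcases h2 with h2 | h2
    · rcases hxy i with h' | h' <;> [exact h1 h'; exact h2 h']
    · rcases hxz i with h' | h' <;> [exact h1 h'; exact h2 h']
  have hcard : (Finset.univ.filter fun i => ¬(x i = 0 ∧ y i = 0 ∧ z i = 0)).card = 3*k := by
    rw [hfe, Finset.card_union_of_disjoint hdx, Finset.card_union_of_disjoint hdyz]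
    have e1 : (Finset.univ.filter fun i => x i ≠ 0).card = k := hwx
    have e2 : (Finset.univ.filter fun i => y i ≠ 0).card = k := hwy
    have e3 : (Finset.univ.filter fun i => z i ≠ 0).card = k := hwz
    omega
  rw [Finset.card_univ, Fintype.card_fin] at h0
  omega

lemma dist_ones {n : ℕ} (x : Fin n → ZMod 2) :
    hammingDist (fun _ => (1 : ZMod 2)) x = n - hammingNorm x := by
  classical
  have hpt : ∀ p : ZMod 2, ((1 : ZMod 2) ≠ p) ↔ ¬(p ≠ 0) := by decide
  have hfe : (Finset.univ.filter fun i => (fun _ => (1:ZMod 2)) i ≠ x i)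
      = (Finset.univ.filter fun i => x i ≠ 0)ᶜ := by
    ext i
    simp only [Finset.mem_filter, Finset.mem_univ, true_and, Finset.mem_compl]
    exact hpt _
  show (Finset.univ.filter _).card = _
  rw [hfe, Finset.card_compl, Fintype.card_fin]
  rfl

lemma unique_common (k : ℕ) (x y z : Fin (3*k+1) → ZMod 2)
    (hwx : hammingNorm x = k) (hwy : hammingNorm y = k) (hwz : hammingNorm z = k)
    (hxy : ∀ i, x i = 0 ∨ y i = 0) (hxz : ∀ i, x i = 0 ∨ z i = 0)
    (hyz : ∀ i, y i = 0 ∨ z i = 0)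
    (v : Fin (3*k+1) → ZMod 2)
    (h1 : 2*k+1 ≤ hammingDist v x) (h2 : 2*k+1 ≤ hammingDist v y)
    (h3 : 2*k+1 ≤ hammingDist v z) : v = fun _ => 1 := by
  classical
  funext j
  by_contra hj
  have hj0 : v j = 0 := (zmod2_cases (v j)).resolve_right hj
  set g : Fin (3*k+1) → ℕ := fun i =>
    (if v i ≠ x i then 1 else 0) + (if v i ≠ y i then 1 else 0) + (if v i ≠ z i then 1 else 0)
    with hg
  have hsum : ∑ i, g i = hammingDist v x + hammingDist v y + hammingDist v z := by
    show _ = (Finset.univ.filter fun i => v i ≠ x i).card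
        + (Finset.univ.filter fun i => v i ≠ y i).card
        + (Finset.univ.filter fun i => v i ≠ z i).card
    rw [Finset.card_filter, Finset.card_filter, Finset.card_filter, hg,
      ← Finset.sum_add_distrib, ← Finset.sum_add_distrib]
  set e : Fin (3*k+1) → ℕ := fun i => (if x i = 0 ∧ y i = 0 ∧ z i = 0 then 1 else 0) with he
  have pb1 : ∀ w a b c : ZMod 2, w = 0 → (a = 0 ∨ b = 0) → (a = 0 ∨ c = 0) → (b = 0 ∨ c = 0) →
      (if w ≠ a then 1 else 0) + (if w ≠ b then 1 else 0) + (if w ≠ c then 1 else 0) ≤ 1 := by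
    decide
  have pb2 : ∀ w a b c : ZMod 2, (a = 0 ∨ b = 0) → (a = 0 ∨ c = 0) → (b = 0 ∨ c = 0) →
      (if w ≠ a then 1 else 0) + (if w ≠ b then 1 else 0) + (if w ≠ c then 1 else 0)
        ≤ 2 + (if a = 0 ∧ b = 0 ∧ c = 0 then 1 else 0) := by
    decide
  have hse : ∑ i, e i = 1 := by
    rw [he, ← Finset.card_filter]
    simpa using support_card k x y z hwx hwy hwz hxy hxz hyz
  have herase : ∑ i ∈ Finset.univ.erase j, g i ≤ 6*k + 1 := by
    calc ∑ i ∈ Finset.univ.erase j, g i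
        ≤ ∑ i ∈ Finset.univ.erase j, (2 + e i) := by
          refine Finset.sum_le_sum fun i _ => ?_
          exact pb2 (v i) (x i) (y i) (z i) (hxy i) (hxz i) (hyz i)
      _ = 2 * (Finset.univ.erase j).card + ∑ i ∈ Finset.univ.erase j, e i := by
          rw [Finset.sum_add_distrib, Finset.sum_const, smul_eq_mul, Nat.mul_comm]
      _ ≤ 2 * (Finset.univ.erase j).card + ∑ i, e i := by
          have := Finset.sum_le_sum_of_subset (f := e)
            (Finset.erase_subset j Finset.univ)
          omega
      _ ≤ 6*k + 1 := by
          rw [Finset.card_erase_of_mem (Finset.mem_univ j), Finset.card_univ,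
            Fintype.card_fin, hse]
          omega
  have hgj : g j ≤ 1 := pb1 (v j) (x j) (y j) (z j) hj0 (hxy j) (hxz j) (hyz j)
  have htot : ∑ i, g i ≤ 6*k + 2 := by
    rw [← Finset.sum_erase_add _ _ (Finset.mem_univ j)]
    omega
  omega

theorem stmt_5 (k : ℕ) (hk : 0 < k) (x y z : Fin (3 * k + 1) → ZMod 2)
    (hwx : hammingNorm x = k) (hwy : hammingNorm y = k) (hwz : hammingNorm z = k)
    (hxy : ∀ i, x i = 0 ∨ y i = 0)
    (hxz : ∀ i, x i = 0 ∨ z i = 0)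
    (hyz : ∀ i, y i = 0 ∨ z i = 0) :
    (x ≠ y ∧ x ≠ z ∧ y ≠ z ∧
      ¬ (hypercubeGraph k).Adj x y ∧ ¬ (hypercubeGraph k).Adj x z ∧
      ¬ (hypercubeGraph k).Adj y z) ∧
    {v | (hypercubeGraph k).Adj v x ∧ (hypercubeGraph k).Adj v y ∧
      (hypercubeGraph k).Adj v z} = {fun _ => 1} ∧
    mu3 (hypercubeGraph k) = 1 := by
  have hd : ∀ a b : Fin (3*k+1) → ZMod 2, (∀ i, a i = 0 ∨ b i = 0) →
      hammingNorm a = k → hammingNorm b = k → a ≠ b ∧ ¬ (hypercubeGraph k).Adj a b := by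
    intro a b hab hwa hwb
    have hda : hammingDist a b = 2*k := by
      rw [dist_of_disjoint a b hab, hwa, hwb]; omega
    constructor
    · intro h
      rw [h, hammingDist_self] at hda
      omega
    · show ¬ (2*k+1 ≤ hammingDist a b)
      omega
  obtain ⟨hne1, hna1⟩ := hd x y hxy hwx hwy
  obtain ⟨hne2, hna2⟩ := hd x z hxz hwx hwz
  obtain ⟨hne3, hna3⟩ := hd y z hyz hwy hwz
  have hones : ∀ a : Fin (3*k+1) → ZMod 2, hammingNorm a = k →
      (hypercubeGraph k).Adj (fun _ => 1) a := by
    intro a hwa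
    show 2*k+1 ≤ hammingDist (fun _ => (1 : ZMod 2)) a
    rw [dist_ones, hwa]
    omega
  have hset : {v | (hypercubeGraph k).Adj v x ∧ (hypercubeGraph k).Adj v y ∧
      (hypercubeGraph k).Adj v z} = {fun _ => 1} := by
    ext v
    simp only [Set.mem_setOf_eq, Set.mem_singleton_iff]
    constructor
    · rintro ⟨h1, h2, h3⟩
      exact unique_common k x y z hwx hwy hwz hxy hxz hyz v h1 h2 h3
    · rintro rfl
      exact ⟨hones x hwx, hones y hwy, hones z hwz⟩
  refine ⟨⟨hne1, hne2, hne3, hna1, hna2, hna3⟩, hset, ?_⟩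
  have h1mem : 1 ∈ {n | ∃ a b c : Fin (3*k+1) → ZMod 2, a ≠ b ∧ a ≠ c ∧ b ≠ c ∧
      ¬ (hypercubeGraph k).Adj a b ∧ ¬ (hypercubeGraph k).Adj a c ∧
      ¬ (hypercubeGraph k).Adj b c ∧
      {v | (hypercubeGraph k).Adj v a ∧ (hypercubeGraph k).Adj v b ∧
        (hypercubeGraph k).Adj v c}.ncard = n} := by
    refine ⟨x, y, z, hne1, hne2, hne3, hna1, hna2, hna3, ?_⟩
    rw [hset]
    exact Set.ncard_singleton _
  have hle : mu3 (hypercubeGraph k) ≤ 1 := Nat.sInf_le h1mem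
  have hmem := Nat.sInf_mem (⟨1, h1mem⟩ : Set.Nonempty _)
  obtain ⟨a, b, c, _, _, _, nab, nac, nbc, hcard⟩ := hmem
  have dle : ∀ p q : Fin (3*k+1) → ZMod 2, ¬ (hypercubeGraph k).Adj p q →
      hammingDist p q ≤ 2*k := by
    intro p q h
    have : ¬ (2*k+1 ≤ hammingDist p q) := h
    omega
  obtain ⟨v, hv1, hv2, hv3⟩ := exists_common_neighbor k a b c
    (dle a b nab) (dle a c nac) (dle b c nbc)
  have hpos : 0 < {v | (hypercubeGraph k).Adj v a ∧ (hypercubeGraph k).Adj v b ∧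
      (hypercubeGraph k).Adj v c}.ncard :=
    (Set.ncard_pos (Set.toFinite _)).2 ⟨v, hv1, hv2, hv3⟩
  have heq : mu3 (hypercubeGraph k) = {v | (hypercubeGraph k).Adj v a ∧
      (hypercubeGraph k).Adj v b ∧ (hypercubeGraph k).Adj v c}.ncard := hcard.symm
  omega
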